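/- On R^6, define P with nonzero entries P^{13} = p13, P^{25} = p25, P^{46} = p46 and P' with nonzero entries P'^{13} = a31 x1 + a33 x3, P'^{25} = b52 x2 + b55 x5, P'^{46} = d64 x4 + d66 x6 (real constants). Then P, P' are compatible Poisson structures, and if p13 p25 p46 ≠ 0 the functions H1 = u + v + w, H2 = (u^2+v^2+w^2)/2, H3 = (u^3+v^3+w^3)/3 with u = (a31 x1 + a33 x3)/p13, v = (b52 x2 + b55 x5)/p25, w = (d64 x4 + d66 x6)/p46 are pairwise in bi-involution: {Hi,Hj} = {Hi,Hj}' = 0. -/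

import Mathlib

open scoped BigOperators

noncomputable def pd {m : ℕ} (μ : Fin m) (f : (Fin m → ℝ) → ℝ) (x : Fin m → ℝ) : ℝ :=
  fderiv ℝ f x (Pi.single μ 1)

/-- Poisson bracket associated to a bivector field `P`. -/
noncomputable def pbrk {m : ℕ} (P : (Fin m → ℝ) → Fin m → Fin m → ℝ)
    (f g : (Fin m → ℝ) → ℝ) (x : Fin m → ℝ) : ℝ :=
  ∑ μ, ∑ ν, P x μ ν * pd μ f x * pd ν g x

/-- Schouten bracket `[P,P]^{λμν}`. -/
noncomputable def schouten {m : ℕ} (P : (Fin m → ℝ) → Fin m → Fin m → ℝ)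
    (l μ ν : Fin m) (x : Fin m → ℝ) : ℝ :=
  ∑ ρ, (P x ρ l * pd ρ (fun y => P y μ ν) x
      + P x ρ ν * pd ρ (fun y => P y l μ) x
      + P x ρ μ * pd ρ (fun y => P y ν l) x)

/-- Mixed Schouten bracket `[P,Q]^{λμν}`. -/
noncomputable def schoutenMixed {m : ℕ} (P Q : (Fin m → ℝ) → Fin m → Fin m → ℝ)
    (l μ ν : Fin m) (x : Fin m → ℝ) : ℝ :=
  ∑ ρ, (P x ρ l * pd ρ (fun y => Q y μ ν) x + Q x ρ l * pd ρ (fun y => P y μ ν) x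
      + P x ρ ν * pd ρ (fun y => Q y l μ) x + Q x ρ ν * pd ρ (fun y => P y l μ) x
      + P x ρ μ * pd ρ (fun y => Q y ν l) x + Q x ρ μ * pd ρ (fun y => P y ν l) x)

/-- The Poisson bivector `P` on the nilpotent group `A_{6,24}`. -/
noncomputable def P624 (p13 p25 p46 : ℝ) : (Fin 6 → ℝ) → Fin 6 → Fin 6 → ℝ :=
  fun _ μ ν =>
    !![0, 0, p13, 0, 0, 0;
       0, 0, 0, 0, p25, 0;
       -p13, 0, 0, 0, 0, 0;
       0, 0, 0, 0, 0, p46;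
       0, -p25, 0, 0, 0, 0;
       0, 0, 0, -p46, 0, 0] μ ν

/-- The Poisson bivector `P'` on the nilpotent group `A_{6,24}`. -/
noncomputable def P624' (a31 a33 b52 b55 d64 d66 : ℝ) : (Fin 6 → ℝ) → Fin 6 → Fin 6 → ℝ :=
  fun x μ ν =>
    let A := a31 * x 0 + a33 * x 2
    let B := b52 * x 1 + b55 * x 4
    let C := d64 * x 3 + d66 * x 5
    !![0, 0, A, 0, 0, 0;
       0, 0, 0, 0, B, 0;
       -A, 0, 0, 0, 0, 0;
       0, 0, 0, 0, 0, C;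
       0, -B, 0, 0, 0, 0;
       0, 0, 0, -C, 0, 0] μ ν


-- ## Auxiliary lemmas

@[simp] lemma cv61 {α : Type*} (x:α)(u:Fin 5→α) : Matrix.vecCons x u 1 = u 0 := rfl
@[simp] lemma cv62 {α : Type*} (x:α)(u:Fin 5→α) : Matrix.vecCons x u 2 = u 1 := rfl
@[simp] lemma cv63 {α : Type*} (x:α)(u:Fin 5→α) : Matrix.vecCons x u 3 = u 2 := rfl
@[simp] lemma cv64 {α : Type*} (x:α)(u:Fin 5→α) : Matrix.vecCons x u 4 = u 3 := rfl
@[simp] lemma cv65 {α : Type*} (x:α)(u:Fin 5→α) : Matrix.vecCons x u 5 = u 4 := rfl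
@[simp] lemma cv41 {α : Type*} (x:α)(u:Fin 4→α) : Matrix.vecCons x u 1 = u 0 := rfl
@[simp] lemma cv42 {α : Type*} (x:α)(u:Fin 4→α) : Matrix.vecCons x u 2 = u 1 := rfl
@[simp] lemma cv43 {α : Type*} (x:α)(u:Fin 4→α) : Matrix.vecCons x u 3 = u 2 := rfl
@[simp] lemma cv44 {α : Type*} (x:α)(u:Fin 4→α) : Matrix.vecCons x u 4 = u 3 := rfl
@[simp] lemma cv31 {α : Type*} (x:α)(u:Fin 3→α) : Matrix.vecCons x u 1 = u 0 := rfl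
@[simp] lemma cv32 {α : Type*} (x:α)(u:Fin 3→α) : Matrix.vecCons x u 2 = u 1 := rfl
@[simp] lemma cv33 {α : Type*} (x:α)(u:Fin 3→α) : Matrix.vecCons x u 3 = u 2 := rfl
@[simp] lemma cv21 {α : Type*} (x:α)(u:Fin 2→α) : Matrix.vecCons x u 1 = u 0 := rfl
@[simp] lemma cv22 {α : Type*} (x:α)(u:Fin 2→α) : Matrix.vecCons x u 2 = u 1 := rfl
@[simp] lemma cv11 {α : Type*} (x:α)(u:Fin 1→α) : Matrix.vecCons x u 1 = u 0 := rfl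

lemma fin6cases {P : Fin 6 → Prop} (h0 : P 0) (h1 : P 1) (h2 : P 2) (h3 : P 3) (h4 : P 4)
    (h5 : P 5) : ∀ i, P i := by
  intro i; fin_cases i <;> assumption

lemma fin3cases {P : Fin 3 → Prop} (h0 : P 0) (h1 : P 1) (h2 : P 2) : ∀ i, P i := by
  intro i; fin_cases i <;> assumption

lemma pd_const {m : ℕ} (μ : Fin m) (c : ℝ) (x : Fin m → ℝ) : pd μ (fun _ => c) x = 0 := by
  simp [pd]

lemma hL {m : ℕ} (c d : ℝ) (i j : Fin m) (x : Fin m → ℝ) :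
    HasFDerivAt (fun y : Fin m → ℝ => c * y i + d * y j)
      (c • (ContinuousLinearMap.proj i : (Fin m → ℝ) →L[ℝ] ℝ)
        + d • (ContinuousLinearMap.proj j : (Fin m → ℝ) →L[ℝ] ℝ)) x :=
  (((ContinuousLinearMap.proj i : (Fin m → ℝ) →L[ℝ] ℝ).hasFDerivAt (x := x)).const_mul c).add
    (((ContinuousLinearMap.proj j : (Fin m → ℝ) →L[ℝ] ℝ).hasFDerivAt (x := x)).const_mul d)

lemma hDiv {m : ℕ} {f : (Fin m → ℝ) → ℝ} {f' : (Fin m → ℝ) →L[ℝ] ℝ} {x}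
    (hf : HasFDerivAt f f' x) (c : ℝ) :
    HasFDerivAt (fun y => f y / c) (c⁻¹ • f') x := by
  simpa only [div_eq_inv_mul] using hf.const_mul c⁻¹

lemma hLdiv {m : ℕ} (c d p : ℝ) (i j : Fin m) (x : Fin m → ℝ) :
    HasFDerivAt (fun y : Fin m → ℝ => (c * y i + d * y j) / p)
      (p⁻¹ • (c • (ContinuousLinearMap.proj i : (Fin m → ℝ) →L[ℝ] ℝ)
        + d • (ContinuousLinearMap.proj j : (Fin m → ℝ) →L[ℝ] ℝ))) x :=
  hDiv (hL c d i j x) p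

lemma hLpow {m : ℕ} (c d p : ℝ) (i j : Fin m) (n : ℕ) (x : Fin m → ℝ) :
    HasFDerivAt (fun y : Fin m → ℝ => ((c * y i + d * y j) / p) ^ n)
      (((n : ℝ) * ((c * x i + d * x j) / p) ^ (n - 1)) •
        (p⁻¹ • (c • (ContinuousLinearMap.proj i : (Fin m → ℝ) →L[ℝ] ℝ)
          + d • (ContinuousLinearMap.proj j : (Fin m → ℝ) →L[ℝ] ℝ)))) x :=
  HasDerivAt.comp_hasFDerivAt x (hasDerivAt_pow n _) (hLdiv c d p i j x)

lemma pd_lin2 {m : ℕ} (c d : ℝ) (i j μ : Fin m) (x : Fin m → ℝ) :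
    pd μ (fun y => c * y i + d * y j) x
      = c * (Pi.single μ 1 : Fin m → ℝ) i + d * (Pi.single μ 1 : Fin m → ℝ) j := by
  rw [pd, (hL c d i j x).fderiv]; simp

lemma pd_neg {m : ℕ} (μ : Fin m) (f : (Fin m → ℝ) → ℝ) (x : Fin m → ℝ) :
    pd μ (fun y => -f y) x = - pd μ f x := by
  rw [pd, pd, fderiv_fun_neg]; simp

lemma pd_Hsum {m : ℕ} (c1 c2 d1 d2 e1 e2 p q r : ℝ) (i1 i2 j1 j2 k1 k2 μ : Fin m)
    (x : Fin m → ℝ) :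
    pd μ (fun y => (c1 * y i1 + c2 * y i2) / p + (d1 * y j1 + d2 * y j2) / q
        + (e1 * y k1 + e2 * y k2) / r) x
      = (c1 * (Pi.single μ 1 : Fin m → ℝ) i1 + c2 * (Pi.single μ 1 : Fin m → ℝ) i2) / p
        + (d1 * (Pi.single μ 1 : Fin m → ℝ) j1 + d2 * (Pi.single μ 1 : Fin m → ℝ) j2) / q
        + (e1 * (Pi.single μ 1 : Fin m → ℝ) k1 + e2 * (Pi.single μ 1 : Fin m → ℝ) k2) / r := by
  rw [pd, (((hLdiv c1 c2 p i1 i2 x).fun_add (hLdiv d1 d2 q j1 j2 x)).fun_add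
      (hLdiv e1 e2 r k1 k2 x)).fderiv]
  simp [div_eq_inv_mul]; ring

lemma pd_Hpow {m : ℕ} (c1 c2 d1 d2 e1 e2 p q r s : ℝ) (n : ℕ) (i1 i2 j1 j2 k1 k2 μ : Fin m)
    (x : Fin m → ℝ) :
    pd μ (fun y => (((c1 * y i1 + c2 * y i2) / p) ^ n + ((d1 * y j1 + d2 * y j2) / q) ^ n
        + ((e1 * y k1 + e2 * y k2) / r) ^ n) / s) x
      = ((n : ℝ) * ((c1 * x i1 + c2 * x i2) / p) ^ (n - 1)
            * ((c1 * (Pi.single μ 1 : Fin m → ℝ) i1 + c2 * (Pi.single μ 1 : Fin m → ℝ) i2) / p)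
        + (n : ℝ) * ((d1 * x j1 + d2 * x j2) / q) ^ (n - 1)
            * ((d1 * (Pi.single μ 1 : Fin m → ℝ) j1 + d2 * (Pi.single μ 1 : Fin m → ℝ) j2) / q)
        + (n : ℝ) * ((e1 * x k1 + e2 * x k2) / r) ^ (n - 1)
            * ((e1 * (Pi.single μ 1 : Fin m → ℝ) k1 + e2 * (Pi.single μ 1 : Fin m → ℝ) k2) / r)) / s := by
  rw [pd, (hDiv (((hLpow c1 c2 p i1 i2 n x).fun_add (hLpow d1 d2 q j1 j2 n x)).fun_add
      (hLpow e1 e2 r k1 k2 n x)) s).fderiv]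
  simp [div_eq_inv_mul]; ring

lemma pd_P624 (p13 p25 p46 : ℝ) (ρ μ ν : Fin 6) (x : Fin 6 → ℝ) :
    pd ρ (fun y => P624 p13 p25 p46 y μ ν) x = 0 :=
  pd_const ρ (P624 p13 p25 p46 x μ ν) x

lemma pd_P624' (a31 a33 b52 b55 d64 d66 : ℝ) (ρ : Fin 6) (x : Fin 6 → ℝ) : ∀ μ ν : Fin 6,
    pd ρ (fun y => P624' a31 a33 b52 b55 d64 d66 y μ ν) x
      = P624' a31 a33 b52 b55 d64 d66 (Pi.single ρ 1) μ ν := by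
  refine fin6cases ?_ ?_ ?_ ?_ ?_ ?_ <;> refine fin6cases ?_ ?_ ?_ ?_ ?_ ?_ <;>
    (simp only [P624', Matrix.of_apply, Matrix.cons_val_zero, cv61, cv62, cv63, cv64, cv65,
      cv41, cv42, cv43, cv44, cv31, cv32, cv33, cv21, cv22, cv11, pd_neg, pd_lin2, pd_const]
     <;> try ring)

set_option maxHeartbeats 2000000 in
lemma schouten_P624' (a31 a33 b52 b55 d64 d66 : ℝ) (x : Fin 6 → ℝ) : ∀ l μ ν : Fin 6,
    schouten (P624' a31 a33 b52 b55 d64 d66) l μ ν x = 0 := by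
  refine fin6cases ?_ ?_ ?_ ?_ ?_ ?_ <;> refine fin6cases ?_ ?_ ?_ ?_ ?_ ?_ <;>
      refine fin6cases ?_ ?_ ?_ ?_ ?_ ?_ <;>
    (simp only [schouten, Fin.sum_univ_six, pd_P624'];
     simp (config := { decide := true }) only [P624',
      Matrix.of_apply, Matrix.cons_val_zero, cv61, cv62, cv63, cv64, cv65,
      cv41, cv42, cv43, cv44, cv31, cv32, cv33, cv21, cv22, cv11,
      Pi.single_apply, if_true, if_false] <;> try ring)

set_option maxHeartbeats 2000000 in
lemma schouten_mixed624 (p13 p25 p46 a31 a33 b52 b55 d64 d66 : ℝ) (x : Fin 6 → ℝ) :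
    ∀ l μ ν : Fin 6,
    schoutenMixed (P624 p13 p25 p46) (P624' a31 a33 b52 b55 d64 d66) l μ ν x = 0 := by
  refine fin6cases ?_ ?_ ?_ ?_ ?_ ?_ <;> refine fin6cases ?_ ?_ ?_ ?_ ?_ ?_ <;>
      refine fin6cases ?_ ?_ ?_ ?_ ?_ ?_ <;>
    (simp only [schoutenMixed, Fin.sum_univ_six, pd_P624', pd_P624];
     simp (config := { decide := true }) only [P624, P624',
      Matrix.of_apply, Matrix.cons_val_zero, cv61, cv62, cv63, cv64, cv65,
      cv41, cv42, cv43, cv44, cv31, cv32, cv33, cv21, cv22, cv11,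
      Pi.single_apply, if_true, if_false, mul_zero, add_zero, zero_add] <;> try ring)


set_option maxHeartbeats 1600000 in
theorem A624_compatible_and_involution (p13 p25 p46 a31 a33 b52 b55 d64 d66 : ℝ) :
    ((∀ x l μ ν, schouten (P624 p13 p25 p46) l μ ν x = 0) ∧
     (∀ x l μ ν, schouten (P624' a31 a33 b52 b55 d64 d66) l μ ν x = 0) ∧
     (∀ x l μ ν, schoutenMixed (P624 p13 p25 p46)
        (P624' a31 a33 b52 b55 d64 d66) l μ ν x = 0)) ∧
    (p13 * p25 * p46 ≠ 0 →
      let u : (Fin 6 → ℝ) → ℝ := fun x => (a31 * x 0 + a33 * x 2) / p13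
      let v : (Fin 6 → ℝ) → ℝ := fun x => (b52 * x 1 + b55 * x 4) / p25
      let w : (Fin 6 → ℝ) → ℝ := fun x => (d64 * x 3 + d66 * x 5) / p46
      let H : Fin 3 → (Fin 6 → ℝ) → ℝ :=
        ![fun x => u x + v x + w x,
          fun x => ((u x) ^ 2 + (v x) ^ 2 + (w x) ^ 2) / 2,
          fun x => ((u x) ^ 3 + (v x) ^ 3 + (w x) ^ 3) / 3]
      ∀ i j : Fin 3, ∀ x,
        pbrk (P624 p13 p25 p46) (H i) (H j) x = 0 ∧
        pbrk (P624' a31 a33 b52 b55 d64 d66) (H i) (H j) x = 0) := by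
  constructor
  · refine ⟨?_, ?_, ?_⟩
    · intro x l μ ν
      simp [schouten, pd_P624]
    · intro x l μ ν
      exact schouten_P624' a31 a33 b52 b55 d64 d66 x l μ ν
    · intro x l μ ν
      exact schouten_mixed624 p13 p25 p46 a31 a33 b52 b55 d64 d66 x l μ ν
  · intro hne
    show ∀ i j : Fin 3, ∀ x : Fin 6 → ℝ,
        pbrk (P624 p13 p25 p46)
          ((![fun x => (a31 * x 0 + a33 * x 2) / p13 + (b52 * x 1 + b55 * x 4) / p25
                + (d64 * x 3 + d66 * x 5) / p46,
              fun x => (((a31 * x 0 + a33 * x 2) / p13) ^ 2 + ((b52 * x 1 + b55 * x 4) / p25) ^ 2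
                + ((d64 * x 3 + d66 * x 5) / p46) ^ 2) / 2,
              fun x => (((a31 * x 0 + a33 * x 2) / p13) ^ 3 + ((b52 * x 1 + b55 * x 4) / p25) ^ 3
                + ((d64 * x 3 + d66 * x 5) / p46) ^ 3) / 3] :
            Fin 3 → (Fin 6 → ℝ) → ℝ) i)
          ((![fun x => (a31 * x 0 + a33 * x 2) / p13 + (b52 * x 1 + b55 * x 4) / p25
                + (d64 * x 3 + d66 * x 5) / p46,
              fun x => (((a31 * x 0 + a33 * x 2) / p13) ^ 2 + ((b52 * x 1 + b55 * x 4) / p25) ^ 2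
                + ((d64 * x 3 + d66 * x 5) / p46) ^ 2) / 2,
              fun x => (((a31 * x 0 + a33 * x 2) / p13) ^ 3 + ((b52 * x 1 + b55 * x 4) / p25) ^ 3
                + ((d64 * x 3 + d66 * x 5) / p46) ^ 3) / 3] :
            Fin 3 → (Fin 6 → ℝ) → ℝ) j) x = 0 ∧
        pbrk (P624' a31 a33 b52 b55 d64 d66)
          ((![fun x => (a31 * x 0 + a33 * x 2) / p13 + (b52 * x 1 + b55 * x 4) / p25
                + (d64 * x 3 + d66 * x 5) / p46,
              fun x => (((a31 * x 0 + a33 * x 2) / p13) ^ 2 + ((b52 * x 1 + b55 * x 4) / p25) ^ 2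
                + ((d64 * x 3 + d66 * x 5) / p46) ^ 2) / 2,
              fun x => (((a31 * x 0 + a33 * x 2) / p13) ^ 3 + ((b52 * x 1 + b55 * x 4) / p25) ^ 3
                + ((d64 * x 3 + d66 * x 5) / p46) ^ 3) / 3] :
            Fin 3 → (Fin 6 → ℝ) → ℝ) i)
          ((![fun x => (a31 * x 0 + a33 * x 2) / p13 + (b52 * x 1 + b55 * x 4) / p25
                + (d64 * x 3 + d66 * x 5) / p46,
              fun x => (((a31 * x 0 + a33 * x 2) / p13) ^ 2 + ((b52 * x 1 + b55 * x 4) / p25) ^ 2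
                + ((d64 * x 3 + d66 * x 5) / p46) ^ 2) / 2,
              fun x => (((a31 * x 0 + a33 * x 2) / p13) ^ 3 + ((b52 * x 1 + b55 * x 4) / p25) ^ 3
                + ((d64 * x 3 + d66 * x 5) / p46) ^ 3) / 3] :
            Fin 3 → (Fin 6 → ℝ) → ℝ) j) x = 0
    refine fin3cases ?_ ?_ ?_ <;> refine fin3cases ?_ ?_ ?_ <;> intro x <;>
      refine ⟨?_, ?_⟩ <;>
      (simp only [Matrix.cons_val_zero, cv31, cv32, cv21, cv22, cv11];
       simp only [pbrk, Fin.sum_univ_six, pd_Hsum, pd_Hpow];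
       simp (config := { decide := true }) only [P624, P624',
        Matrix.of_apply, Matrix.cons_val_zero, cv61, cv62, cv63, cv64, cv65,
        cv41, cv42, cv43, cv44, cv31, cv32, cv33, cv21, cv22, cv11,
        Pi.single_apply, if_true, if_false]
       <;> push_cast [] <;> try ring)
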